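/- The generating function Σ_{n≥0} sp(n) x^n of the total number of symmetric peaks over all Dyck paths of length 2(n+1) equals (1/(2x))·(1 + (5x-1)/((1-x)·sqrt(1-4x))). -/

import Mathlib

open PowerSeries

/-- A path (`true` = up step, `false` = down step) never goes below the x-axis. -/
def DyckNonneg (p : List Bool) : Prop :=
  ∀ q : List Bool, q <+: p → q.count false ≤ q.count true

/-- `p` is a Dyck path. -/
def IsDyck (p : List Bool) : Prop :=
  DyckNonneg p ∧ p.count true = p.count false

/-- Dyck paths of length `m` with a distinguished symmetric peak
(a maximal mountain `u^a d^a`). -/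
def SymPeakMarked (m : ℕ) : Type :=
  { q : List Bool × ℕ × List Bool //
      1 ≤ q.2.1 ∧
      q.1.getLast? ≠ some true ∧
      q.2.2.head? ≠ some false ∧
      IsDyck (q.1 ++ List.replicate q.2.1 true ++ List.replicate q.2.1 false ++ q.2.2) ∧
      (q.1 ++ List.replicate q.2.1 true ++ List.replicate q.2.1 false ++ q.2.2).length = m }

/-- sp(n): the total number of symmetric peaks over all Dyck paths of length 2(n+1). -/
noncomputable def sp (n : ℕ) : ℕ := Nat.card (SymPeakMarked (2 * (n + 1)))

/-- The series 1/sqrt(1-4x) = Σ_{n≥0} binom(2n,n) x^n. -/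
noncomputable def invSqrtGF : PowerSeries ℚ := PowerSeries.mk fun n => ((2 * n).choose n : ℚ)


open List

lemma dyckNonneg_iff_take (p : List Bool) :
    DyckNonneg p ↔ ∀ i, (p.take i).count false ≤ (p.take i).count true := by
  constructor
  · exact fun h i => h _ (List.take_prefix i p)
  · intro h q hq
    obtain ⟨i, rfl⟩ : ∃ i, q = p.take i := ⟨q.length, (List.prefix_iff_eq_take.mp hq)⟩
    exact h i

lemma count_take_rep_t (i a : ℕ) : (((List.replicate a true).take i).count true = min i a)
    ∧ (((List.replicate a true).take i).count false = 0) := by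
  rw [List.take_replicate]; constructor <;> simp [List.count_replicate]

lemma count_take_rep_f (i a : ℕ) : (((List.replicate a false).take i).count false = min i a)
    ∧ (((List.replicate a false).take i).count true = 0) := by
  rw [List.take_replicate]; constructor <;> simp [List.count_replicate]

lemma count_take_mountain (A B : List Bool) (a i : ℕ) (b : Bool) :
    ((A ++ List.replicate a true ++ List.replicate a false ++ B).take i).count b =
    ((A.take i).count b + (((List.replicate a true)).take (i - A.length)).count b)
      + ((((List.replicate a false)).take (i - A.length - a)).count b
      + ((B.take (i - A.length - 2*a)).count b) ):= by
  rw [List.append_assoc, List.append_assoc]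
  rw [List.take_append, List.count_append,
    List.take_append, List.count_append,
    List.take_append, List.count_append]
  simp only [List.length_replicate]
  have : i - A.length - a - a = i - A.length - 2*a := by omega
  rw [this, add_assoc]

lemma count_take_app (A B : List Bool) (i : ℕ) (b : Bool) :
    ((A ++ B).take i).count b = (A.take i).count b + (B.take (i - A.length)).count b := by
  rw [List.take_append, List.count_append]

lemma takeAll {A : List Bool} {i : ℕ} (h : A.length ≤ i) : A.take i = A :=
  List.take_of_length_le h

/-- Inserting a balanced mountain `u^a d^a` preserves/reflects Dyckness. -/
lemma isDyck_insert_mountain (A B : List Bool) (a : ℕ) :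
    IsDyck (A ++ List.replicate a true ++ List.replicate a false ++ B) ↔ IsDyck (A ++ B) := by
  constructor
  all_goals
    rintro ⟨h1, h2⟩
    rw [dyckNonneg_iff_take] at h1
    refine ⟨(dyckNonneg_iff_take _).mpr ?_, ?_⟩
  · -- nonneg of A ++ B from big
    intro i
    rw [count_take_app, count_take_app]
    rcases le_or_gt i A.length with hi | hi
    · have := h1 i
      rw [count_take_mountain, count_take_mountain] at this
      have hz : i - A.length = 0 := by omega
      rw [hz] at this ⊢
      simpa using this
    · have := h1 (i + 2 * a)
      rw [count_take_mountain, count_take_mountain] at this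
      rw [(count_take_rep_t _ _).1, (count_take_rep_t _ _).2,
        (count_take_rep_f _ _).1, (count_take_rep_f _ _).2,
        takeAll (A := A) (i := i + 2*a) (by omega)] at this
      have e3 : i + 2*a - A.length - 2*a = i - A.length := by omega
      rw [e3] at this
      rw [takeAll (A := A) (i := i) (le_of_lt hi)]
      omega
  · -- count eq
    have r1 : (List.replicate a true).count true = a := by simp
    have r2 : (List.replicate a true).count false = 0 := by simp [List.count_replicate]
    have r3 : (List.replicate a false).count false = a := by simp
    have r4 : (List.replicate a false).count true = 0 := by simp [List.count_replicate]
    simp only [List.count_append, r1, r2, r3, r4] at h2 ⊢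
    omega
  · -- nonneg of big from A ++ B
    intro i
    rw [count_take_mountain, count_take_mountain,
      (count_take_rep_t _ _).1, (count_take_rep_t _ _).2,
      (count_take_rep_f _ _).1, (count_take_rep_f _ _).2]
    rcases le_or_gt i (A.length + 2 * a) with hi | hi
    · have hA := h1 (min i A.length)
      rw [count_take_app, count_take_app] at hA
      have hz : min i A.length - A.length = 0 := by omega
      rw [hz] at hA
      simp only [List.take_zero, List.count_nil, List.take_take, min_self,
        add_zero] at hA
      have hz2 : i - A.length - 2*a = 0 := by omega
      rw [hz2]
      simp only [List.take_zero, List.count_nil]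
      rcases le_or_gt i A.length with h | h
      · rw [min_eq_left h] at hA
        have : i - A.length = 0 := by omega
        rw [this]
        simpa using hA
      · rw [min_eq_right (le_of_lt h), List.take_length] at hA
        rw [takeAll (le_of_lt h)]
        omega
    · have := h1 (i - 2 * a)
      rw [count_take_app, count_take_app] at this
      rw [takeAll (A := A) (i := i - 2*a) (by omega)] at this
      have e3 : i - 2*a - A.length = i - A.length - 2*a := by omega
      rw [e3] at this
      rw [takeAll (A := A) (i := i) (by omega)]
      have m1 : min (i - A.length) a = a := by omega
      have m2 : min (i - A.length - a) a = a := by omega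
      rw [m1, m2]
      omega
  · have r1 : (List.replicate a true).count true = a := by simp
    have r2 : (List.replicate a true).count false = 0 := by simp [List.count_replicate]
    have r3 : (List.replicate a false).count false = a := by simp
    have r4 : (List.replicate a false).count true = 0 := by simp [List.count_replicate]
    simp only [List.count_append, r1, r2, r3, r4] at h2 ⊢
    omega

/-- A nonempty Dyck path ends with a down step. -/
lemma IsDyck.getLast?_eq_false {p : List Bool} (h : IsDyck p) (hne : p ≠ []) :
    p.getLast? = some false := by
  rcases p.eq_nil_or_concat' with rfl | ⟨q, b, rfl⟩
  · exact absurd rfl hne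
  · rw [List.getLast?_append, List.getLast?_singleton]
    cases b
  -- b = false case:
    · rfl
    · exfalso
      have hq : q.count false ≤ q.count true := h.1 q (by simp)
      have := h.2
      simp [List.count_append] at this
      omega

/-- Run decomposition: any list of booleans splits as `replicate i true ++ rest` with
`rest` not starting with `true`. -/
lemma run_decomp (l : List Bool) :
    l = List.replicate (l.takeWhile id).length true ++ l.dropWhile id ∧
      (l.dropWhile id).head? ≠ some true := by
  constructor
  · conv_lhs => rw [← List.takeWhile_append_dropWhile (p := id) (l := l)]
    congr 1
    rw [List.eq_replicate_iff]
    exact ⟨rfl, fun b hb => List.mem_takeWhile_imp hb⟩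
  · intro h
    cases hD : l.dropWhile id with
    | nil => rw [hD] at h; simp at h
    | cons x xs =>
      have hlen : 0 < (l.dropWhile id).length := by rw [hD]; simp
      have := List.dropWhile_get_zero_not id l hlen
      rw [hD] at h
      simp at h
      rw [List.get_eq_getElem] at this
      simp [hD] at this
      simp [h] at this

lemma run_unique : ∀ (i : ℕ) {j : ℕ} {l l' : List Bool},
    List.replicate i true ++ l = List.replicate j true ++ l' →
    l.head? ≠ some true → l'.head? ≠ some true → i = j ∧ l = l'
  | 0, j, l, l' => by
    intro h hl hl'
    cases j with
    | zero => simpa using h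
    | succ k =>
      exfalso
      rw [List.replicate_succ] at h
      simp at h
      rw [h] at hl
      simp at hl
  | (i+1), j, l, l' => by
    intro h hl hl'
    cases j with
    | zero =>
      exfalso
      rw [List.replicate_succ] at h
      simp at h
      rw [← h] at hl'
      simp at hl'
    | succ k =>
      rw [List.replicate_succ, List.replicate_succ] at h
      simp only [List.cons_append, List.cons.injEq] at h
      obtain ⟨ij, hl2⟩ := run_unique i h.2 hl hl'
      exact ⟨by omega, hl2⟩

/-- Trailing-run length of `true`s. -/
def trailLen (l : List Bool) : ℕ := (l.reverse.takeWhile id).length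
/-- The list with its trailing run of `true`s removed. -/
def trimTrail (l : List Bool) : List Bool := (l.reverse.dropWhile id).reverse

lemma trail_decomp (l : List Bool) :
    l = trimTrail l ++ List.replicate (trailLen l) true ∧
      (trimTrail l).getLast? ≠ some true := by
  obtain ⟨h1, h2⟩ := run_decomp l.reverse
  constructor
  · have := congrArg List.reverse h1
    rw [List.reverse_reverse, List.reverse_append, List.reverse_replicate] at this
    exact this
  · rw [trimTrail, List.getLast?_reverse]
    exact h2

lemma trail_unique {l A : List Bool} {t : ℕ} (h : l = A ++ List.replicate t true)
    (hA : A.getLast? ≠ some true) : t = trailLen l ∧ A = trimTrail l := by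
  obtain ⟨h1, h2⟩ := trail_decomp l
  have hrev : List.replicate t true ++ A.reverse
      = List.replicate (trailLen l) true ++ (trimTrail l).reverse := by
    have e1 := congrArg List.reverse h
    have e2 := congrArg List.reverse h1
    rw [List.reverse_append, List.reverse_replicate] at e1 e2
    rw [← e1, e2]
  have := run_unique t hrev (by rwa [List.head?_reverse]) (by rwa [List.head?_reverse])
  exact ⟨this.1, by have := congrArg List.reverse this.2; simpa using this⟩

lemma lead_unique {l B : List Bool} {t : ℕ} (h : l = List.replicate t true ++ B)
    (hB : B.head? ≠ some true) :
    t = (l.takeWhile id).length ∧ B = l.dropWhile id := by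
  obtain ⟨h1, h2⟩ := run_decomp l
  have heq : List.replicate t true ++ B
      = List.replicate (l.takeWhile id).length true ++ l.dropWhile id := by
    rw [← h, ← h1]
  have := run_unique t heq hB h2
  exact this

def Dk (k : ℕ) : Type := {p : List Bool // IsDyck p ∧ p.length = 2*k}

def VMk (k : ℕ) : Type :=
  { q : List Bool × List Bool //
      q.1.getLast? ≠ some true ∧ q.2.head? ≠ some false ∧
      IsDyck (q.1 ++ q.2) ∧ (q.1 ++ q.2).length = 2*k }

section VMhelpers
variable {A B : List Bool}

lemma vm_head_true (hB : B.head? ≠ some false) (hBn : B ≠ []) : B.head? = some true := by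
  cases B with
  | nil => exact absurd rfl hBn
  | cons b t => cases b
                · exact absurd rfl hB
                · rfl

lemma vm_lead_pos (hB : B.head? ≠ some false) (hBn : B ≠ []) :
    1 ≤ (B.takeWhile id).length := by
  have := vm_head_true hB hBn
  cases B with
  | nil => simp at this
  | cons b t =>
    simp at this
    subst this
    rw [List.takeWhile_cons]
    simp

lemma vm_B2 (hD : IsDyck (A ++ B)) (hB : B.head? ≠ some false) (hBn : B ≠ []) :
    B.dropWhile id = false :: (B.dropWhile id).tail := by
  obtain ⟨h1, h2⟩ := run_decomp B
  have hne : B.dropWhile id ≠ [] := by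
    intro hnil
    rw [hnil, List.append_nil] at h1
    set i := (B.takeWhile id).length with hi
    have hipos : 1 ≤ i := vm_lead_pos hB hBn
    have hlast : (A ++ B).getLast? = some true := by
      rw [h1]
      have : List.replicate i true = List.replicate (i-1) true ++ [true] := by
        rw [← List.replicate_succ']
        congr 1
        omega
      rw [this, ← List.append_assoc]
      rw [List.getLast?_append, List.getLast?_singleton]
      rfl
    have := IsDyck.getLast?_eq_false hD (by simp [hBn])
    rw [this] at hlast
    simp at hlast
  cases hdw : B.dropWhile id with
  | nil => exact absurd hdw hne
  | cons b t =>
    rw [hdw] at h2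
    cases b
    · rfl
    · simp at h2

lemma vm_key_eq (hD : IsDyck (A ++ B)) (hB : B.head? ≠ some false) (hBn : B ≠ []) :
    A ++ B = (A ++ List.replicate ((B.takeWhile id).length - 1) true)
      ++ [true] ++ [false] ++ (B.dropWhile id).tail := by
  obtain ⟨h1, _⟩ := run_decomp B
  have h2 := vm_B2 hD hB hBn
  have hipos := vm_lead_pos hB hBn
  conv_lhs => rw [h1, h2]
  have : List.replicate ((B.takeWhile id).length) true
      = List.replicate ((B.takeWhile id).length - 1) true ++ [true] := by
    rw [← List.replicate_succ']
    congr 1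
    omega
  rw [this]
  simp [List.append_assoc]

end VMhelpers

def vmToFun (k : ℕ) (x : VMk (k+1)) : (Dk k × Fin (2*k+1)) ⊕ Dk (k+1) :=
  if hBn : x.val.2 = [] then
    .inr ⟨x.val.1, by
      obtain ⟨⟨A, B⟩, hA, hB, hD, hL⟩ := x
      simp only at hBn
      subst hBn
      rw [List.append_nil] at hD hL
      exact ⟨hD, hL⟩⟩
  else
    .inl ⟨⟨(x.val.1 ++ List.replicate ((x.val.2.takeWhile id).length - 1) true)
            ++ (x.val.2.dropWhile id).tail, by
        obtain ⟨⟨A, B⟩, hA, hB, hD, hL⟩ := x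
        simp only at hBn ⊢
        have hkey := vm_key_eq hD hB hBn
        constructor
        · exact (isDyck_insert_mountain
            (A ++ List.replicate ((B.takeWhile id).length - 1) true)
            ((B.dropWhile id).tail) 1).mp (by
              simpa only [List.replicate_one] using (hkey ▸ hD))
        · have hlen := congrArg List.length hkey
          rw [hL] at hlen
          simp only [List.length_append, List.length_replicate,
            List.length_singleton] at hlen ⊢
          omega⟩,
      ⟨(x.val.1 ++ List.replicate ((x.val.2.takeWhile id).length - 1) true).length, by
        obtain ⟨⟨A, B⟩, hA, hB, hD, hL⟩ := x
        simp only at hBn ⊢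
        have hkey := vm_key_eq hD hB hBn
        have hlen := congrArg List.length hkey
        rw [hL] at hlen
        simp only [List.length_append, List.length_replicate,
          List.length_singleton] at hlen ⊢
        omega⟩⟩

def vmInvFun (k : ℕ) (y : (Dk k × Fin (2*k+1)) ⊕ Dk (k+1)) : VMk (k+1) :=
  match y with
  | .inr ⟨p, hp⟩ => ⟨(p, []), by
      refine ⟨?_, by simp, by rw [List.append_nil]; exact hp.1, by
        rw [List.append_nil]; exact hp.2⟩
      rcases eq_or_ne p [] with rfl | hne
      · simp
      · rw [IsDyck.getLast?_eq_false hp.1 hne]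
        simp⟩
  | .inl ⟨⟨E, hE⟩, ⟨j, hj⟩⟩ =>
      ⟨(trimTrail (E.take j),
        List.replicate (trailLen (E.take j) + 1) true ++ false :: E.drop j), by
      obtain ⟨ht1, ht2⟩ := trail_decomp (E.take j)
      refine ⟨ht2, by simp [List.replicate_succ], ?_, ?_⟩
      · have hkey : trimTrail (E.take j)
            ++ (List.replicate (trailLen (E.take j) + 1) true ++ false :: E.drop j)
            = (E.take j) ++ [true] ++ [false] ++ E.drop j := by
          conv_rhs => rw [ht1]
          rw [List.replicate_succ']
          simp [List.append_assoc]
        rw [hkey]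
        exact (isDyck_insert_mountain (E.take j) (E.drop j) 1).mpr
          (by rw [List.take_append_drop]; exact hE.1)
      · simp only [List.length_append, List.length_replicate, List.length_cons]
        have := congrArg List.length ht1
        simp only [List.length_append, List.length_replicate] at this
        have h1 : (E.take j).length + (E.drop j).length = E.length := by
          rw [← List.length_append, List.take_append_drop]
        rw [hE.2] at h1
        omega⟩

lemma vm_left_inv (k : ℕ) (x : VMk (k+1)) : vmInvFun k (vmToFun k x) = x := by
  obtain ⟨⟨A, B⟩, hA, hB, hD, hL⟩ := x
  by_cases hBn : B = []
  · subst hBn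
    simp only [vmToFun, vmInvFun]
    rw [dif_pos trivial]
  · simp only [vmToFun]
    rw [dif_neg hBn]
    simp only [vmInvFun]
    apply Subtype.ext
    simp only
    set i := (B.takeWhile id).length with hi
    have hipos : 1 ≤ i := vm_lead_pos hB hBn
    set C := A ++ List.replicate (i - 1) true with hC
    set D := (B.dropWhile id).tail with hDf
    have htake : (C ++ D).take C.length = C := List.take_left (l₁ := C) (l₂ := D)
    have hdrop : (C ++ D).drop C.length = D := List.drop_left (l₁ := C) (l₂ := D)
    have htu := trail_unique hC hA
    have hB2 := vm_B2 hD hB hBn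
    have hBdec : B = List.replicate i true ++ (false :: D) := by
      conv_lhs => rw [(run_decomp B).1]
      rw [hB2]
    refine Prod.ext ?_ ?_ <;> simp only [htake, hdrop]
    · exact htu.2.symm
    · rw [← htu.1]
      have : i - 1 + 1 = i := by omega
      rw [this, ← hBdec]

lemma vm_right_inv (k : ℕ) (y : (Dk k × Fin (2*k+1)) ⊕ Dk (k+1)) :
    vmToFun k (vmInvFun k y) = y := by
  match y with
  | .inr ⟨p, hp⟩ =>
    simp only [vmInvFun, vmToFun]
    exact dif_pos rfl
  | .inl ⟨⟨E, hE⟩, ⟨j, hj⟩⟩ =>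
    simp only [vmInvFun, vmToFun]
    set T := trimTrail (E.take j) with hT
    set t := trailLen (E.take j) with ht
    set B := List.replicate (t + 1) true ++ false :: E.drop j with hBdef
    have hBn : B ≠ [] := by simp [hBdef, List.replicate_succ]
    refine (dif_neg hBn).trans ?_
    have hhead : (false :: E.drop j).head? ≠ some true := by simp
    have hlu := lead_unique hBdef hhead
    have htake : (E.take j).length = j := by
      rw [List.length_take]
      have := hE.2
      omega
    have hC : T ++ List.replicate ((B.takeWhile id).length - 1) true = E.take j := by
      rw [← hlu.1]
      simp only [Nat.add_sub_cancel]
      exact (trail_decomp (E.take j)).1.symm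
    have hD2 : (B.dropWhile id).tail = E.drop j := by
      rw [← hlu.2]
      rfl
    congr 1
    refine Prod.ext ?_ ?_
    · apply Subtype.ext
      show T ++ List.replicate ((B.takeWhile id).length - 1) true ++ (B.dropWhile id).tail = E
      simp only [hC, hD2]
      exact List.take_append_drop j E
    · apply Fin.ext
      show (T ++ List.replicate ((B.takeWhile id).length - 1) true).length = j
      rw [congrArg List.length hC, htake]

noncomputable def vmEquiv (k : ℕ) : VMk (k+1) ≃ (Dk k × Fin (2*k+1)) ⊕ Dk (k+1) :=
  ⟨vmToFun k, vmInvFun k, vm_left_inv k, vm_right_inv k⟩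

lemma isDyck_nil : IsDyck ([] : List Bool) :=
  ⟨fun q hq => by simp [List.prefix_nil.mp hq], rfl⟩

noncomputable def vm0Equiv : VMk 0 ≃ Unit where
  toFun _ := ()
  invFun _ := ⟨([], []), by simp, by simp, by simpa using isDyck_nil, by simp⟩
  left_inv x := by
    obtain ⟨⟨A, B⟩, hA, hB, hD, hL⟩ := x
    have : A = [] ∧ B = [] := by
      have := List.length_append (as := A) (bs := B) ▸ hL
      constructor <;> [skip; skip] <;>
        (apply List.eq_nil_of_length_eq_zero; omega)
    apply Subtype.ext
    simp [this.1, this.2]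
  right_inv _ := rfl

noncomputable def spEquiv (n : ℕ) :
    SymPeakMarked (2*(n+1)) ≃ Σ a : Fin (n+1), VMk (n - a.val) where
  toFun x :=
    ⟨⟨x.val.2.1 - 1, by
        obtain ⟨⟨A, a, B⟩, h1, hA, hB, hD, hL⟩ := x
        simp only [List.length_append, List.length_replicate] at hL
        show a - 1 < n + 1
        omega⟩,
      ⟨(x.val.1, x.val.2.2), by
        obtain ⟨⟨A, a, B⟩, h1, hA, hB, hD, hL⟩ := x
        simp only [List.length_append, List.length_replicate] at hL
        dsimp only at h1
        refine ⟨hA, hB, (isDyck_insert_mountain A B a).mp hD, ?_⟩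
        simp only [List.length_append]
        show A.length + B.length = 2 * (n - (a - 1))
        omega⟩⟩
  invFun y :=
    ⟨(y.2.val.1, y.1.val + 1, y.2.val.2), by
      obtain ⟨⟨i, hi⟩, ⟨⟨A, B⟩, hA, hB, hD, hL⟩⟩ := y
      simp only [List.length_append] at hL
      dsimp only at hL ⊢
      refine ⟨by omega, hA, hB, (isDyck_insert_mountain A B (i+1)).mpr hD, ?_⟩
      simp only [List.length_append, List.length_replicate]
      omega⟩
  left_inv x := by
    obtain ⟨⟨A, a, B⟩, h1, hA, hB, hD, hL⟩ := x
    dsimp only at h1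
    apply Subtype.ext
    show (A, a - 1 + 1, B) = (A, a, B)
    have : a - 1 + 1 = a := by omega
    rw [this]
  right_inv y := by
    obtain ⟨⟨i, hi⟩, ⟨⟨A, B⟩, hA, hB, hD, hL⟩⟩ := y
    rfl

open DyckStep in
def boolToStep (b : Bool) : DyckStep := if b then U else D
open DyckStep in
def stepToBool (s : DyckStep) : Bool := match s with | U => true | D => false

open DyckStep in
lemma stepToBool_boolToStep (b : Bool) : stepToBool (boolToStep b) = b := by
  cases b <;> rfl
open DyckStep in
lemma boolToStep_stepToBool (s : DyckStep) : boolToStep (stepToBool s) = s := by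
  cases s <;> rfl
open DyckStep in
lemma boolToStep_inj : Function.Injective boolToStep := fun a b h => by
  cases a <;> cases b <;> simp [boolToStep] at h ⊢
open DyckStep in
lemma stepToBool_inj : Function.Injective stepToBool := fun a b h => by
  cases a <;> cases b <;> simp [stepToBool] at h ⊢

open DyckStep in
noncomputable def dkEquiv (k : ℕ) : Dk k ≃ {w : DyckWord // w.semilength = k} where
  toFun x :=
    ⟨⟨x.val.map boolToStep, by
        have h2 := x.prop.1.2
        rw [show U = boolToStep true from rfl, show D = boolToStep false from rfl,
          List.count_map_of_injective _ _ boolToStep_inj,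
          List.count_map_of_injective _ _ boolToStep_inj]
        exact h2, by
        intro i
        have h1 := (dyckNonneg_iff_take _).mp x.prop.1.1 i
        rw [← List.map_take, show U = boolToStep true from rfl,
          show D = boolToStep false from rfl,
          List.count_map_of_injective _ _ boolToStep_inj,
          List.count_map_of_injective _ _ boolToStep_inj]
        exact h1⟩, by
      have := x.prop.2
      have hlen : (x.val.map boolToStep).length = 2 * k := by simpa using this
      show DyckWord.semilength _ = k
      have h2 := DyckWord.two_mul_semilength_eq_length
        (p := ⟨x.val.map boolToStep, by
          rw [show U = boolToStep true from rfl, show D = boolToStep false from rfl,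
            List.count_map_of_injective _ _ boolToStep_inj,
            List.count_map_of_injective _ _ boolToStep_inj]
          exact x.prop.1.2, by
          intro i
          have h1 := (dyckNonneg_iff_take _).mp x.prop.1.1 i
          rw [← List.map_take, show U = boolToStep true from rfl,
            show D = boolToStep false from rfl,
            List.count_map_of_injective _ _ boolToStep_inj,
            List.count_map_of_injective _ _ boolToStep_inj]
          exact h1⟩)
      simp only at h2
      omega⟩
  invFun y :=
    ⟨y.val.toList.map stepToBool, by
      constructor
      constructor
      · rw [dyckNonneg_iff_take]
        intro i
        have h1 := y.val.count_D_le_count_U i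
        rw [← List.map_take, show true = stepToBool U from rfl,
          show false = stepToBool D from rfl,
          List.count_map_of_injective _ _ stepToBool_inj,
          List.count_map_of_injective _ _ stepToBool_inj]
        exact h1
      · rw [show true = stepToBool U from rfl, show false = stepToBool D from rfl,
          List.count_map_of_injective _ _ stepToBool_inj,
          List.count_map_of_injective _ _ stepToBool_inj]
        exact y.val.count_U_eq_count_D
      · rw [List.length_map, ← DyckWord.two_mul_semilength_eq_length, y.prop]⟩
  left_inv x := by
    apply Subtype.ext
    show (x.val.map boolToStep).map stepToBool = x.val
    rw [List.map_map]
    simp [Function.comp_def, stepToBool_boolToStep]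
  right_inv y := by
    apply Subtype.ext
    apply DyckWord.ext
    show (y.val.toList.map stepToBool).map boolToStep = y.val.toList
    rw [List.map_map]
    simp [Function.comp_def, boolToStep_stepToBool]

instance dkFinite (k : ℕ) : Finite (Dk k) := Finite.of_equiv _ (dkEquiv k).symm

lemma card_Dk (k : ℕ) : Nat.card (Dk k) = catalan k := by
  rw [Nat.card_congr (dkEquiv k), Nat.card_eq_fintype_card,
    DyckWord.card_dyckWord_semilength_eq_catalan]

instance vmFinite (k : ℕ) : Finite (VMk k) := by
  cases k with
  | zero => exact Finite.of_equiv _ vm0Equiv.symm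
  | succ k => exact Finite.of_equiv _ (vmEquiv k).symm

/-- The number of valley-marked Dyck paths of semilength `k`. -/
def vnum : ℕ → ℕ
  | 0 => 1
  | (k+1) => catalan k * (2*k+1) + catalan (k+1)

lemma card_VMk (k : ℕ) : Nat.card (VMk k) = vnum k := by
  cases k with
  | zero => rw [Nat.card_congr vm0Equiv]; simp [vnum]
  | succ k =>
    rw [Nat.card_congr (vmEquiv k), Nat.card_sum, Nat.card_prod, card_Dk, card_Dk,
      Nat.card_eq_fintype_card]
    simp [vnum]

lemma sp_eq_sum (n : ℕ) : sp n = ∑ i ∈ Finset.range (n+1), vnum i := by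
  classical
  haveI : ∀ j, Fintype (VMk j) := fun j => Fintype.ofFinite _
  rw [sp, Nat.card_congr (spEquiv n), Nat.card_eq_fintype_card, Fintype.card_sigma]
  have h1 : ∀ a : Fin (n+1), Fintype.card (VMk (n - a.val)) = vnum (n - a.val) := by
    intro a
    rw [← Nat.card_eq_fintype_card, card_VMk]
  simp_rw [h1]
  rw [Fin.sum_univ_eq_sum_range (fun i => vnum (n - i))]
  have := Finset.sum_range_reflect (fun i => vnum i) (n+1)
  simpa using this

lemma sp_zero : sp 0 = 1 := by simp [sp_eq_sum, vnum]

lemma sp_succ (n : ℕ) : sp (n+1) = sp n + vnum (n+1) := by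
  rw [sp_eq_sum, sp_eq_sum, Finset.sum_range_succ]

lemma key_nat_identity (n : ℕ) :
    2 * ((vnum (n+1) : ℕ) : ℚ)
      = 5 * ((2*(n+1)).choose (n+1) : ℚ) - ((2*(n+2)).choose (n+2) : ℚ) := by
  have f1 : ((n:ℚ)+1) * (catalan n : ℚ) = (Nat.centralBinom n : ℚ) := by
    exact_mod_cast congrArg (Nat.cast : ℕ → ℚ) (succ_mul_catalan_eq_centralBinom n)
  have f2 : ((n:ℚ)+2) * (catalan (n+1) : ℚ) = (Nat.centralBinom (n+1) : ℚ) := by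
    have := congrArg (Nat.cast : ℕ → ℚ) (succ_mul_catalan_eq_centralBinom (n+1))
    push_cast at this
    linear_combination this
  have f3 : ((n:ℚ)+1) * (Nat.centralBinom (n+1) : ℚ)
      = 2 * (2*(n:ℚ)+1) * (Nat.centralBinom n : ℚ) := by
    have := congrArg (Nat.cast : ℕ → ℚ) (Nat.succ_mul_centralBinom_succ n)
    push_cast at this
    linear_combination this
  have f4 : ((n:ℚ)+2) * (Nat.centralBinom (n+2) : ℚ)
      = 2 * (2*(n:ℚ)+3) * (Nat.centralBinom (n+1) : ℚ) := by
    have := congrArg (Nat.cast : ℕ → ℚ) (Nat.succ_mul_centralBinom_succ (n+1))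
    push_cast at this
    linear_combination this
  have hb1 : ((2*(n+1)).choose (n+1) : ℚ) = (Nat.centralBinom (n+1) : ℚ) := by
    rw [Nat.centralBinom]
  have hb2 : ((2*(n+2)).choose (n+2) : ℚ) = (Nat.centralBinom (n+2) : ℚ) := by
    rw [Nat.centralBinom]
  rw [hb1, hb2]
  show 2 * ((catalan n * (2*n+1) + catalan (n+1) : ℕ) : ℚ) = _
  push_cast
  have hne : ((n:ℚ)+1) * ((n:ℚ)+2) ≠ 0 := by positivity
  apply mul_left_cancel₀ hne
  linear_combination (2*(2*(n:ℚ)+1)*((n:ℚ)+2)) * f1 + (2*((n:ℚ)+1)) * f2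
    - ((n:ℚ)+2) * f3 + ((n:ℚ)+1) * f4


/-- Σ_{n≥0} sp(n) x^n = (1/(2x))·(1 + (5x-1)/((1-x)·sqrt(1-4x))), stated with
denominators cleared: 2x(1-x)·Σ sp(n)x^n = (1-x) + (5x-1)/sqrt(1-4x). -/
theorem sp_generating_function :
    2 * (X : PowerSeries ℚ) * (1 - X) * PowerSeries.mk (fun n => (sp n : ℚ))
      = (1 - X) + (5 * X - 1) * invSqrtGF := by

  have h2C : (2 : PowerSeries ℚ) = PowerSeries.C (R := ℚ) 2 := (map_ofNat _ 2).symm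
  have h5C : (5 : PowerSeries ℚ) = PowerSeries.C (R := ℚ) 5 := (map_ofNat _ 5).symm
  have key : (X : PowerSeries ℚ) * (2 * PowerSeries.mk (fun n => (sp n : ℚ)))
      - X * (X * (2 * PowerSeries.mk (fun n => (sp n : ℚ))))
      = 1 - X + (X * (5 * invSqrtGF) - invSqrtGF) := by
    rw [h2C, h5C]
    ext n
    match n with
    | 0 =>
      simp [PowerSeries.coeff_zero_X_mul, invSqrtGF, PowerSeries.coeff_mk]
    | 1 =>
      simp only [map_sub, map_add, PowerSeries.coeff_succ_X_mul,
        PowerSeries.coeff_zero_X_mul, PowerSeries.coeff_one, PowerSeries.coeff_X,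
        PowerSeries.coeff_C_mul, PowerSeries.coeff_mk, invSqrtGF]
      rw [sp_zero]
      norm_num
    | (m+2) =>
      simp only [map_sub, map_add, PowerSeries.coeff_succ_X_mul,
        PowerSeries.coeff_zero_X_mul, PowerSeries.coeff_one, PowerSeries.coeff_X,
        PowerSeries.coeff_C_mul, PowerSeries.coeff_mk, invSqrtGF]
      rw [sp_succ m]
      have hk := key_nat_identity m
      push_cast at hk ⊢
      linear_combination hk
  linear_combination key
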